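/- For every integer n ≥ 0 and every k ≥ 1, the coefficient a_k in the expansion of t^n + t^{-n} - 2 as a polynomial in w = 2 - t - t^{-1} (i.e. t^n + t^{-n} - 2 = Σ_{k=1}^{n} a_k w^k in the Laurent polynomial ring ℤ[t, t^{-1}]) equals (-1)^k (n/k) · binom(n+k-1, 2k-1). -/

import Mathlib

open LaurentPolynomial Finset


noncomputable def cc (n k : ℕ) : ℤ :=
  if k = 0 then 2 else (-1)^k * (2 * ((n+k).choose (2*k)) - ((n+k-1).choose (2*k-1)))

lemma cc_zero (n k : ℕ) (h : n < k) : cc n k = 0 := by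
  have hk : k ≠ 0 := by omega
  simp only [cc, if_neg hk]
  rw [Nat.choose_eq_zero_of_lt (by omega), Nat.choose_eq_zero_of_lt (by omega)]
  simp

lemma cc_rec1 (n : ℕ) : cc (n+2) 1 = 2 * cc (n+1) 1 - cc (n+1) 0 - cc n 1 := by
  simp only [cc, if_neg one_ne_zero, if_pos rfl]
  norm_num [Nat.choose_two_right, Nat.choose_one_right]
  push_cast [Nat.succ_sub_one]
  ring_nf
  omega

lemma pascal4 (p q : ℕ) : 2*((p+3).choose (q+4)) + 2*((p+1).choose (q+3)) + p.choose (q+1) + 2*((p+1).choose (q+4)) = (p+2).choose (q+3) + 4*((p+2).choose (q+4)) + 2*((p+1).choose (q+2)) + p.choose (q+3) := by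
  simp [Nat.choose_succ_succ]
  ring_nf

lemma cc_rec (n k : ℕ) : cc (n+2) (k+1) = 2 * cc (n+1) (k+1) - cc (n+1) k - cc n (k+1) := by
  cases k with
  | zero => exact cc_rec1 n
  | succ j =>
    simp only [cc, if_neg (Nat.succ_ne_zero _)]
    simp only [show n+2+(j+1+1) = (n+j+1)+3 by omega, show n+1+(j+1+1) = (n+j+1)+2 by omega,
      show n+1+(j+1) = (n+j+1)+1 by omega, show n+(j+1+1) = (n+j+1)+1 by omega,
      show 2*(j+1+1) = (2*j)+4 by omega, show 2*(j+1) = (2*j)+2 by omega,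
      show n+j+1+3-1 = (n+j+1)+2 by omega, show n+j+1+2-1 = (n+j+1)+1 by omega,
      show n+j+1+1-1 = (n+j+1) by omega, show 2*j+4-1 = (2*j)+3 by omega,
      show 2*j+2-1 = (2*j)+1 by omega, pow_succ (-1 : ℤ) (j+1)]
    have key := pascal4 (n+j+1) (2*j)
    have keyz : (2:ℤ)*(((n+j+1)+3).choose ((2*j)+4)) + 2*(((n+j+1)+1).choose ((2*j)+3)) + ((n+j+1)).choose ((2*j)+1) + 2*(((n+j+1)+1).choose ((2*j)+4)) = ((n+j+1)+2).choose ((2*j)+3) + 4*(((n+j+1)+2).choose ((2*j)+4)) + 2*(((n+j+1)+1).choose ((2*j)+2)) + ((n+j+1)).choose ((2*j)+3) := by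
      exact_mod_cast congrArg (Nat.cast : ℕ → ℤ) key
    linear_combination (-(-1:ℤ)^(j+1)) * keyz

lemma cc_val (n k : ℕ) (hk : 1 ≤ k) :
    (k : ℤ) * cc n k = (-1)^k * n * ((n + k - 1).choose (2*k - 1)) := by
  simp only [cc, if_neg (by omega : k ≠ 0)]
  have h := Nat.add_one_mul_choose_eq (n + k - 1) (2*k - 1)
  rw [show n+k-1+1 = n + k by omega, show 2*k-1+1 = 2*k by omega] at h
  have hz : ((n+k : ℕ) : ℤ) * ((n + k - 1).choose (2*k - 1)) = ((n+k).choose (2*k)) * ((2*k : ℕ) : ℤ) := by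
    exact_mod_cast congrArg (Nat.cast : ℕ → ℤ) h
  push_cast at hz ⊢
  linear_combination (-(-1:ℤ)^k) * hz

noncomputable def W : LaurentPolynomial ℤ := 2 - T 1 - T (-1)

set_option maxHeartbeats 1000000 in
lemma sum_key (n : ℕ) :
    (2 - W) * (∑ k ∈ range (n+2), C (cc (n+1) k) * W^k) - (∑ k ∈ range (n+1), C (cc n k) * W^k)
    = ∑ k ∈ range (n+3), C (cc (n+2) k) * W^k := by
  have ext1 : ∑ k ∈ range (n+2), C (cc (n+1) k) * W^k = ∑ k ∈ range (n+3), C (cc (n+1) k) * W^k :=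
    Finset.sum_subset (by intro x hx; simp only [Finset.mem_range] at *; omega)
      (by intro x hx hnx; simp only [Finset.mem_range] at hx hnx
          rw [cc_zero (n+1) x (by omega)]; simp)
  have ext2 : ∑ k ∈ range (n+1), C (cc n k) * W^k = ∑ k ∈ range (n+3), C (cc n k) * W^k :=
    Finset.sum_subset (by intro x hx; simp only [Finset.mem_range] at *; omega)
      (by intro x hx hnx; simp only [Finset.mem_range] at hx hnx
          rw [cc_zero n x (by omega)]; simp)
  rw [ext1, ext2, sub_mul, two_mul, Finset.mul_sum]
  have hw : ∀ k : ℕ, W * (C (cc (n+1) k) * W^k) = C (cc (n+1) k) * W^(k+1) := by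
    intro k; ring
  simp only [hw]
  rw [Finset.sum_range_succ' (fun k => C (cc (n+2) k) * W^k) (n+2),
      Finset.sum_range_succ' (fun k => C (cc (n+1) k) * W^k) (n+2),
      Finset.sum_range_succ' (fun k => C (cc n k) * W^k) (n+2),
      Finset.sum_range_succ (fun k => C (cc (n+1) k) * W^(k+1)) (n+2),
      cc_zero (n+1) (n+2) (by omega)]
  have hc : ∀ k ∈ range (n+2), C (cc (n+2) (k+1)) * W^(k+1)
      = (C (cc (n+1) (k+1)) * W^(k+1) + C (cc (n+1) (k+1)) * W^(k+1))
        - C (cc (n+1) k) * W^(k+1) - C (cc n (k+1)) * W^(k+1) := by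
    intro k _
    rw [cc_rec]
    simp only [map_sub, map_mul, map_ofNat]
    ring
  rw [Finset.sum_congr rfl hc]
  have c0 : ∀ m, cc m 0 = 2 := fun m => if_pos rfl
  simp only [Finset.sum_add_distrib, Finset.sum_sub_distrib, c0, map_zero, zero_mul, map_ofNat]
  ring

lemma expand : ∀ n : ℕ, (T (n:ℤ) + T (-(n:ℤ)) : LaurentPolynomial ℤ) = ∑ k ∈ range (n+1), C (cc n k) * W ^ k := by
  intro n
  induction n using Nat.twoStepInduction with
  | zero =>
    simp only [Nat.cast_zero, neg_zero, T_zero, Finset.range_one, Finset.sum_singleton, pow_zero,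
      mul_one]
    norm_num [cc]
  | one =>
    have h1 : cc 1 0 = 2 := rfl
    have h2 : cc 1 1 = -1 := by norm_num [cc]
    rw [show (1:ℕ)+1 = 2 from rfl, Finset.sum_range_succ, Finset.sum_range_one, h1, h2]
    simp only [W, pow_zero, pow_one, Nat.cast_one]
    push_cast
    simp only [map_neg, map_one, map_ofNat]
    ring
  | more m ih0 ih1 =>
    have e : ∀ a b : ℤ, (T a * T b : LaurentPolynomial ℤ) = T (a+b) := fun a b => (T_add a b).symm
    have hmul : (T 1 + T (-1)) * (T ((m:ℤ)+1) + T (-((m:ℤ)+1)))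
        = (T ((m:ℤ)+2) + T (-((m:ℤ)+2))) + ((T (m:ℤ) + T (-(m:ℤ))) : LaurentPolynomial ℤ) := by
      simp only [add_mul, mul_add, e]
      rw [show (1:ℤ) + ((m:ℤ)+1) = (m:ℤ)+2 by ring, show (1:ℤ) + -((m:ℤ)+1) = -(m:ℤ) by ring,
        show (-1:ℤ) + ((m:ℤ)+1) = (m:ℤ) by ring, show (-1:ℤ) + -((m:ℤ)+1) = -((m:ℤ)+2) by ring]
      ring
    have hW : (T 1 + T (-1) : LaurentPolynomial ℤ) = 2 - W := by rw [W]; ring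
    have key := sum_key m
    push_cast at ih1 ⊢
    rw [show (m:ℕ)+2+1 = m+3 by omega]
    rw [show m+1+1 = m+2 from rfl] at ih1
    rw [← key, ← ih1, ← ih0, ← hW]
    linear_combination -hmul

section Uniq
open Polynomial in
lemma unique (n : ℕ) (d : ℕ → ℤ) (h : ∑ k ∈ Finset.Icc 1 n, LaurentPolynomial.C (d k) * W^k = 0) :
    ∀ k ∈ Finset.Icc 1 n, d k = 0 := by
  have hWT : W * T 1 = Polynomial.toLaurent (-((X:ℤ[X])-1)^2) := by
    have h2 : (-((X:ℤ[X])-1)^2) = (2:ℤ[X]) * X - X^2 - 1 := by ring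
    rw [h2]
    simp only [map_sub, map_mul, map_one, map_ofNat, Polynomial.toLaurent_X, map_pow]
    rw [W]
    have e : ∀ a b : ℤ, (T a * T b : LaurentPolynomial ℤ) = T (a+b) := fun a b => (T_add a b).symm
    simp only [sub_mul, add_mul, e, pow_two]
    norm_num
  -- Step 2: q = 0 in ℤ[X]
  have hq : (∑ k ∈ Finset.Icc 1 n, Polynomial.C (d k) * ((-((X:ℤ[X])-1)^2)^k * X^(n-k))) = 0 := by
    apply Polynomial.toLaurent_injective
    rw [map_sum, map_zero]
    have hterm : ∀ k ∈ Finset.Icc 1 n,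
        Polynomial.toLaurent (Polynomial.C (d k) * ((-((X:ℤ[X])-1)^2)^k * X^(n-k)))
        = (LaurentPolynomial.C (d k) * W^k) * T (n:ℤ) := by
      intro k hk
      simp only [Finset.mem_Icc] at hk
      rw [map_mul, map_mul, map_pow, Polynomial.toLaurent_C, Polynomial.toLaurent_X_pow, ← hWT]
      rw [mul_pow, T_pow, mul_one]
      rw [mul_assoc, mul_assoc, ← T_add]
      congr 2
      push_cast [hk.2]
      ring
    rw [Finset.sum_congr rfl hterm, ← Finset.sum_mul, h, zero_mul]
  -- Step 3: compose with X+1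
  have hr : (∑ k ∈ Finset.Icc 1 n,
      Polynomial.C ((-1)^k * d k) * ((X:ℤ[X])+1)^(n-k) * X^(2*k)) = 0 := by
    have hc := congrArg (fun p : ℤ[X] => p.comp ((X:ℤ[X])+1)) hq
    simp only [Polynomial.zero_comp] at hc
    rw [← hc]
    rw [Polynomial.sum_comp]
    refine Finset.sum_congr rfl fun k hk => ?_
    simp only [Polynomial.mul_comp, Polynomial.pow_comp, Polynomial.neg_comp,
      Polynomial.sub_comp, Polynomial.X_comp, Polynomial.one_comp, Polynomial.C_comp,
      add_sub_cancel_right]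
    have hxk : (-((X:ℤ[X]))^2)^k = Polynomial.C ((-1)^k) * X^(2*k) := by
      rw [neg_pow, map_pow, map_neg, map_one, pow_mul]
    rw [hxk, map_mul]
    ring
  -- Step 4: coefficient extraction
  have key : ∀ k, k ∈ Finset.Icc 1 n → d k = 0 := by
    intro k0
    induction k0 using Nat.strong_induction_on with
    | _ k0 IH =>
      intro hk0
      have hco := congrArg (fun p : ℤ[X] => p.coeff (2*k0)) hr
      simp only [Polynomial.finset_sum_coeff, Polynomial.coeff_zero] at hco
      rw [Finset.sum_eq_single k0] at hco
      · rw [Polynomial.coeff_mul_X_pow', if_pos le_rfl, Nat.sub_self,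
          Polynomial.coeff_zero_eq_eval_zero] at hco
        simp only [Polynomial.eval_mul, Polynomial.eval_C, Polynomial.eval_pow,
          Polynomial.eval_add, Polynomial.eval_X, Polynomial.eval_one, zero_add, one_pow,
          mul_one] at hco
        have : ((-1:ℤ))^k0 * d k0 = 0 := hco
        rcases mul_eq_zero.mp this with h1 | h2
        · exact absurd h1 (by positivity <;> simp)
        · exact h2
      · intro k hk hne
        rcases lt_or_gt_of_ne hne with hlt | hgt
        · rw [IH k hlt hk]
          simp
        · rw [Polynomial.coeff_mul_X_pow', if_neg (by omega)]
      · intro hk0'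
        exact absurd hk0 hk0'
  exact key
end Uniq

/-- Expansion of `t^n + t^{-n} - 2` in powers of `w = 2 - t - t⁻¹`:
the coefficient `a k` satisfies `a k = (-1)^k (n/k) C(n+k-1, 2k-1)`
(stated multiplied through by `k`). -/
theorem stmt0 (n : ℕ) (a : ℕ → ℤ)
    (h : (T (n : ℤ) + T (-(n : ℤ)) - 2 : LaurentPolynomial ℤ) =
      ∑ k ∈ Finset.Icc 1 n, C (a k) * (2 - T 1 - T (-1)) ^ k) :
    ∀ k ∈ Finset.Icc 1 n,
      (k : ℤ) * a k = (-1) ^ k * (n : ℤ) * (Nat.choose (n + k - 1) (2 * k - 1) : ℤ) := by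
  have hW : (2 - T 1 - T (-1) : LaurentPolynomial ℤ) = W := rfl
  rw [hW] at h
  have hsplit : ∑ k ∈ Finset.range (n+1), C (cc n k) * W^k
      = 2 + ∑ k ∈ Finset.Icc 1 n, C (cc n k) * W^k := by
    rw [Finset.range_eq_Ico, Finset.sum_eq_sum_Ico_succ_bot (by omega),
      Finset.Ico_add_one_right_eq_Icc, show cc n 0 = 2 from rfl]
    norm_num
  have hexp : (T (n : ℤ) + T (-(n : ℤ)) - 2 : LaurentPolynomial ℤ)
      = ∑ k ∈ Finset.Icc 1 n, C (cc n k) * W^k := by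
    rw [expand n, hsplit]; ring
  have hzero : ∑ k ∈ Finset.Icc 1 n, C (a k - cc n k) * W^k = 0 := by
    simp only [map_sub, sub_mul, Finset.sum_sub_distrib]
    rw [← h, ← hexp, sub_self]
  have huniq := unique n (fun k => a k - cc n k) hzero
  intro k hk
  have hak : a k = cc n k := by have := huniq k hk; simpa [sub_eq_zero] using this
  rw [hak]
  exact cc_val n k (by simp only [Finset.mem_Icc] at hk; omega)
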